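/- Let n ≥ 2 and let K be the Cauchy–Szegő kernel on the quaternionic Heisenberg group 𝓗^{n−1}. Then there exist a point g₀ ∈ 𝓗^{n−1} with ‖g₀‖ = 1 and a constant C₀ > 0 such that for every R > 0 and every g ∈ 𝓗^{n−1}, the point g_* = g·δ_R(g₀^{−1}) satisfies ρ(g,g_*) = R and |K(g_*^{−1}·g)| = C₀·R^{−Q}, where Q = 4n+2. -/

import Mathlib

open Quaternion
noncomputable section

/-- An element of the quaternionic Heisenberg group `𝓗^m = Im ℍ × ℍ^m`,
modelled as a pair `(t, y)` with `t : ℍ` (required to be purely imaginary via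
the hypothesis `t.re = 0` in the theorems below) and `y : Fin m → ℍ`. -/
abbrev QH (m : ℕ) := ℍ[ℝ] × (Fin m → ℍ[ℝ])

/-- The group product `(t,y)·(t',y') = (t + t' + 2 Im⟨y,y'⟩, y + y')`, where
`⟨y,y'⟩ = Σ_l conj(y_l)·y'_l`. -/
def qmul {m : ℕ} (g h : QH m) : QH m :=
  (g.1 + h.1 + 2 * (∑ l, star (g.2 l) * h.2 l).im, g.2 + h.2)

/-- The group inverse `(t,y)⁻¹ = (−t,−y)`. -/
def qinv {m : ℕ} (g : QH m) : QH m := (-g.1, -g.2)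

/-- The homogeneous norm `‖(t,y)‖ = (|y|⁴ + |t|²)^{1/4}`. -/
def hnorm {m : ℕ} (g : QH m) : ℝ :=
  ((∑ l, ‖g.2 l‖ ^ 2) ^ 2 + ‖g.1‖ ^ 2) ^ ((1 : ℝ) / 4)

/-- The quasi-distance `ρ(h,g) = ‖g⁻¹·h‖`. -/
def qdist {m : ℕ} (h g : QH m) : ℝ := hnorm (qmul (qinv g) h)

/-- The dilation `δ_r(t,y) = (r²t, ry)`. -/
def qdil {m : ℕ} (r : ℝ) (g : QH m) : QH m := ((r ^ 2 : ℝ) • g.1, r • g.2)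

/-- The normalized Cauchy–Szegő kernel density: `s(σ)` is the `(2n−2)`-nd
derivative at `x = Re σ` of `x ↦ conj(x + Im σ)·(x² + |Im σ|²)^{−2}`
(i.e. `∂^{2(n−1)}/∂x₁^{2(n−1)}[conj σ/|σ|⁴]` with `c_{n−1} = 1`). -/
def sker (n : ℕ) (σ : ℍ[ℝ]) : ℍ[ℝ] :=
  iteratedDeriv (2 * n - 2)
    (fun x : ℝ => ((x ^ 2 + ‖σ.im‖ ^ 2) ^ 2)⁻¹ • star ((x : ℍ[ℝ]) + σ.im)) σ.re

/-- The Cauchy–Szegő kernel `K(t,y) = s(|y|² + t)` on `𝓗^m`. -/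
def Kker (n : ℕ) {m : ℕ} (g : QH m) : ℍ[ℝ] :=
  sker n (((∑ l, ‖g.2 l‖ ^ 2 : ℝ) : ℍ[ℝ]) + g.1)



def imHom : ℍ[ℝ] →+ ℍ[ℝ] where
  toFun := Quaternion.im
  map_zero' := by simp
  map_add' := by simp

lemma im_sum {ι : Type*} (s : Finset ι) (f : ι → ℍ[ℝ]) :
    (∑ l ∈ s, f l).im = ∑ l ∈ s, (f l).im := map_sum imHom f s

lemma star_mul_self_im (a : ℍ[ℝ]) : (star a * a).im = 0 := by
  rw [Quaternion.star_mul_self]; exact Quaternion.im_coe _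

lemma fun_eq (x : ℝ) :
    ((x ^ 2 + ‖(0 : ℍ[ℝ])‖ ^ 2) ^ 2)⁻¹ • star ((x : ℍ[ℝ]) + 0)
      = (x ^ (-3 : ℤ)) • (1 : ℍ[ℝ]) := by
  simp only [norm_zero, add_zero, star_coe]
  have h1 : ((x : ℍ[ℝ])) = x • (1 : ℍ[ℝ]) := by
    rw [← Algebra.algebraMap_eq_smul_one]; rfl
  rw [h1, smul_smul]
  congr 1
  rcases eq_or_ne x 0 with rfl | hx
  · simp [zero_zpow]
  · rw [zpow_neg]
    norm_num
    field_simp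

lemma eqon_iter (k : ℕ) :
    Set.EqOn (deriv^[k] (fun x : ℝ => (x ^ (-3 : ℤ)) • (1 : ℍ[ℝ])))
      (fun x => ((∏ i ∈ Finset.range k, ((-3 : ℝ) - i)) * x ^ ((-3 : ℤ) - k)) • (1 : ℍ[ℝ]))
      {x : ℝ | x ≠ 0} := by
  induction k with
  | zero => intro x _; simp
  | succ k ih =>
    intro x hx
    rw [Function.iterate_succ_apply']
    have hev : deriv^[k] (fun x : ℝ => (x ^ (-3 : ℤ)) • (1 : ℍ[ℝ])) =ᶠ[nhds x]
        (fun x => ((∏ i ∈ Finset.range k, ((-3 : ℝ) - i)) * x ^ ((-3 : ℤ) - k)) • (1 : ℍ[ℝ])) :=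
      Filter.eventuallyEq_of_mem (isOpen_ne.mem_nhds hx) ih
    rw [hev.deriv_eq]
    have hd : HasDerivAt
        (fun x : ℝ => ((∏ i ∈ Finset.range k, ((-3 : ℝ) - i)) * x ^ ((-3 : ℤ) - k)) • (1 : ℍ[ℝ]))
        (((∏ i ∈ Finset.range k, ((-3 : ℝ) - i)) *
          (((((-3 : ℤ) - k : ℤ)) : ℝ) * x ^ ((-3 : ℤ) - k - 1))) • (1 : ℍ[ℝ])) x :=
      ((hasDerivAt_zpow ((-3 : ℤ) - k) x (Or.inl hx)).const_mul _).smul_const _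
    rw [hd.deriv]
    have he : ((-3 : ℤ) - ((k : ℕ) + 1 : ℕ)) = ((-3 : ℤ) - k) - 1 := by push_cast; ring
    rw [he, Finset.prod_range_succ]
    congr 1
    push_cast
    ring

lemma iter_val (k : ℕ) (x : ℝ) (hx : x ≠ 0) :
    iteratedDeriv k (fun x : ℝ => (x ^ (-3 : ℤ)) • (1 : ℍ[ℝ])) x
      = ((∏ i ∈ Finset.range k, ((-3 : ℝ) - i)) * x ^ ((-3 : ℤ) - k)) • (1 : ℍ[ℝ]) := by
  rw [iteratedDeriv_eq_iterate]; exact eqon_iter k hx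

/-- Step 2 of the lower-bound theorem: there exist a point `g₀` on the unit
sphere of `𝓗^{n−1}` and a constant `C₀ > 0` such that for every `R > 0` and
every `g`, the point `g_* = g·δ_R(g₀⁻¹)` satisfies `ρ(g,g_*) = R` and
`|K(g_*⁻¹·g)| = C₀·R^{−Q}`, with `Q = 4n+2`. -/
theorem Kker_pointwise_value (n : ℕ) (hn : 2 ≤ n) :
    ∃ g₀ : QH (n - 1), g₀.1.re = 0 ∧ hnorm g₀ = 1 ∧
      ∃ C₀ : ℝ, 0 < C₀ ∧
        ∀ R : ℝ, 0 < R → ∀ g : QH (n - 1), g.1.re = 0 →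
          qdist g (qmul g (qdil R (qinv g₀))) = R ∧
          ‖Kker n (qmul (qinv (qmul g (qdil R (qinv g₀)))) g)‖
            = C₀ * R ^ (-((4 * (n : ℝ) + 2))) := by
  classical
  have hm : n - 1 ≠ 0 := by omega
  haveI : NeZero (n - 1) := ⟨hm⟩
  set i0 : Fin (n - 1) := ⟨0, by omega⟩
  set y₀ : Fin (n - 1) → ℍ[ℝ] := Pi.single i0 1 with hy₀
  have hsum : ∑ l, ‖y₀ l‖ ^ 2 = 1 := by
    rw [hy₀]
    rw [Finset.sum_eq_single i0]
    · simp
    · intro b _ hb; simp [Pi.single_apply, hb]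
    · simp
  refine ⟨((0 : ℍ[ℝ]), y₀), by simp, ?_, ?_⟩
  · simp [hnorm, hsum]
  set C₀ : ℝ := |∏ i ∈ Finset.range (2 * n - 2), ((-3 : ℝ) - i)| with hC₀
  have hC₀pos : 0 < C₀ := by
    rw [hC₀, abs_pos]
    refine Finset.prod_ne_zero_iff.2 fun i _ => ?_
    have : (0 : ℝ) ≤ i := Nat.cast_nonneg i
    intro h; linarith [h]
  refine ⟨C₀, hC₀pos, ?_⟩
  intro R hR g _
  -- Key algebraic identity
  set A : ℍ[ℝ] := ∑ l, star (g.2 l) * y₀ l with hA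
  have hstar : qmul (qinv (qmul g (qdil R (qinv ((0 : ℍ[ℝ]), y₀))))) g
      = ((0 : ℍ[ℝ]), R • y₀) := by
    simp only [qmul, qinv, qdil, smul_zero, neg_zero, add_zero]
    refine Prod.ext ?_ ?_
    · show -(g.1 + 2 * (∑ l, star (g.2 l) * ((R • -y₀) l)).im)
        + g.1 + 2 * (∑ l, star ((-(g.2 + R • -y₀)) l) * g.2 l).im = 0
      have h1 : (∑ l, star (g.2 l) * ((R • -y₀) l)) = -(R • A) := by
        simp only [Pi.smul_apply, Pi.neg_apply, smul_neg, mul_neg, mul_smul_comm]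
        rw [Finset.sum_neg_distrib, hA, Finset.smul_sum]
      have h2 : (∑ l, star ((-(g.2 + R • -y₀)) l) * g.2 l)
          = -(∑ l, star (g.2 l) * g.2 l) + R • star A := by
        rw [hA, star_sum]
        simp_rw [star_mul, star_star]
        rw [Finset.smul_sum, ← Finset.sum_neg_distrib, ← Finset.sum_add_distrib]
        refine Finset.sum_congr rfl fun l _ => ?_
        simp only [Pi.neg_apply, Pi.add_apply, Pi.smul_apply, star_add, star_neg,
          smul_neg, neg_neg, Quaternion.star_smul]
        rw [neg_add, neg_neg, add_mul, neg_mul, smul_mul_assoc]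
      rw [h1, h2]
      have h3 : (∑ l, star (g.2 l) * g.2 l).im = 0 := by
        rw [im_sum]
        exact Finset.sum_eq_zero fun l _ => star_mul_self_im _
      simp only [Quaternion.im_add, Quaternion.im_neg, Quaternion.im_smul, h3,
        Quaternion.star_im]
      simp [smul_neg]
    · show -(g.2 + R • -y₀) + g.2 = R • y₀
      simp [smul_neg]
  have hsumR : ∑ l, ‖(R • y₀) l‖ ^ 2 = R ^ 2 := by
    have : ∀ l, ‖(R • y₀) l‖ ^ 2 = R ^ 2 * ‖y₀ l‖ ^ 2 := by
      intro l
      simp [norm_smul, mul_pow, sq_abs]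
    rw [Finset.sum_congr rfl fun l _ => this l, ← Finset.mul_sum, hsum, mul_one]
  constructor
  · rw [qdist, hstar, hnorm]
    simp only [norm_zero]
    rw [hsumR]
    rw [show (R ^ 2) ^ 2 + 0 ^ 2 = R ^ (4 : ℕ) by ring]
    rw [← Real.rpow_natCast R 4, ← Real.rpow_mul hR.le]
    norm_num
  · rw [hstar, Kker, hsumR]
    have hσ : (((R ^ 2 : ℝ) : ℍ[ℝ]) + 0) = ((R ^ 2 : ℝ) : ℍ[ℝ]) := add_zero _
    rw [hσ, sker]
    have him : ((R ^ 2 : ℝ) : ℍ[ℝ]).im = 0 := Quaternion.im_coe _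
    have hre : ((R ^ 2 : ℝ) : ℍ[ℝ]).re = R ^ 2 := Quaternion.re_coe _
    rw [him, hre]
    have hfe : (fun x : ℝ => ((x ^ 2 + ‖(0 : ℍ[ℝ])‖ ^ 2) ^ 2)⁻¹ • star ((x : ℍ[ℝ]) + 0))
        = fun x : ℝ => (x ^ (-3 : ℤ)) • (1 : ℍ[ℝ]) := funext fun x => fun_eq x
    rw [hfe]
    have hR2 : (R ^ 2 : ℝ) ≠ 0 := by positivity
    rw [iter_val _ _ hR2]
    rw [norm_smul, norm_one, mul_one, Real.norm_eq_abs, abs_mul, ← hC₀]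
    congr 1
    have hzp : (0 : ℝ) < (R ^ 2) ^ ((-3 : ℤ) - (2 * n - 2 : ℕ)) := by positivity
    rw [abs_of_pos hzp]
    have hexp : ((-3 : ℤ) - (2 * n - 2 : ℕ)) = -(2 * (n : ℤ) + 1) := by
      have h2 : ((2 * n - 2 : ℕ) : ℤ) = 2 * (n : ℤ) - 2 := by
        have := hn; push_cast [Nat.cast_sub (by omega : 2 ≤ 2 * n)]; ring
      rw [h2]; ring
    rw [hexp]
    rw [← Real.rpow_intCast (R ^ 2) _, ← Real.rpow_natCast R 2,
      ← Real.rpow_mul hR.le]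
    congr 1
    push_cast
    ring
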